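/- Fix n ∈ ℕ, 0 < ε ≤ 1 and K ≥ 2^n·ε, and let (P, ṽ) be the packing game of the instability construction with weights w̃ (identical to w except w̃({r}) = 1 − ε). Then the allocation ỹ : P → ℝ with ỹ(r) = 1 − ε, ỹ(p_i^{(l)}) = l·K + 2^{l−2}·ε, and ỹ(q_i^{(l)}) = l·K − 2^{l−2}·ε for all l ∈ {1,…,n+2}, i ∈ {1,…,4}, is the nucleolus of (P, ṽ): ỹ(P) = ṽ(P), and θ_{ṽ}(z) ≤_lex θ_{ṽ}(ỹ) for every z : P → ℝ with z(P) = ṽ(P). -/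

import Mathlib

/-- The players of the instability construction: a root `r`, and players `p i (l)`,
`q i (l)` for levels `l ∈ {1, …, n+2}` (encoded by `Fin (n+2)`, level `= l.1 + 1`) and
`i ∈ {1, …, 4}`. -/
inductive Player (n : ℕ) : Type where
  | r : Player n
  | p : Fin (n + 2) → Fin 4 → Player n
  | q : Fin (n + 2) → Fin 4 → Player n
  deriving DecidableEq, Fintype

/-- Index set for the family `𝒮` of the instability construction. -/
inductive Idx (n : ℕ) : Type where
  | root : Idx n
  | rootP : Fin 4 → Idx n
  | pair : Fin (n + 2) → Fin 4 → Idx n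
  | quad : Fin (n + 1) → Fin 4 → Idx n
  deriving DecidableEq, Fintype

/-- The coalitions of the family `𝒮`: `{r}`; `{r, p_i^{(1)}}`; `{p_i^{(l)}, q_i^{(l)}}`;
and `{q_1^{(l)}, q_2^{(l)}, q_3^{(l)}, q_4^{(l)}, p_i^{(l+1)}}`. -/
def coal {n : ℕ} : Idx n → Finset (Player n)
  | .root => {Player.r}
  | .rootP i => {Player.r, Player.p 0 i}
  | .pair l i => {Player.p l i, Player.q l i}
  | .quad l i => {Player.q l.castSucc 0, Player.q l.castSucc 1, Player.q l.castSucc 2,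
      Player.q l.castSucc 3, Player.p l.succ i}

/-- The weights of the family `𝒮`: `rootW` on `{r}` (which is `1` for `w` and `1 − ε` for
`w̃`); `1` on `{r, p_i^{(1)}}`; `2·l·K` on `{p_i^{(l)}, q_i^{(l)}}`; and `4·l·K` on
`{q_1^{(l)}, …, q_4^{(l)}, p_i^{(l+1)}}`. -/
noncomputable def wt {n : ℕ} (K rootW : ℝ) : Idx n → ℝ
  | .root => rootW
  | .rootP _ => 1
  | .pair l _ => 2 * ((l.1 : ℝ) + 1) * K
  | .quad l _ => 4 * ((l.1 : ℝ) + 1) * K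

/-- The packing game of the instability construction: `packV n K rootW S` is the maximum
total weight of a packing of pairwise disjoint members of `𝒮` inside `S` (the empty
packing is allowed). -/
noncomputable def packV (n : ℕ) (K rootW : ℝ) (S : Finset (Player n)) : ℝ :=
  ((Finset.univ : Finset (Idx n)).powerset.filter (fun F =>
      (∀ j ∈ F, coal j ⊆ S) ∧
      ∀ j ∈ F, ∀ j' ∈ F, j ≠ j' → Disjoint (coal j) (coal j'))).sup'
    ⟨∅, by simp⟩ (fun F => ∑ j ∈ F, wt K rootW j)

/-- The sorted (non-decreasing) list of excesses `y(S) − v(S)` over all coalitions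
`S ⊆ P`. -/
noncomputable def excessList (n : ℕ) (v : Finset (Player n) → ℝ) (y : Player n → ℝ) :
    List ℝ :=
  ((Finset.univ : Finset (Player n)).powerset.val.map
    fun S => (∑ p ∈ S, y p) - v S).sort (· ≤ ·)

/-- Lexicographic order (`≤`) on lists of reals. -/
def lexLE (l₁ l₂ : List ℝ) : Prop := l₁ = l₂ ∨ List.Lex (· < ·) l₁ l₂

def Feas {n : ℕ} (S : Finset (Player n)) (F : Finset (Idx n)) : Prop :=
  (∀ j ∈ F, coal j ⊆ S) ∧ ∀ j ∈ F, ∀ j' ∈ F, j ≠ j' → Disjoint (coal j) (coal j')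

lemma mem_packing_filter {n : ℕ} {S : Finset (Player n)} {F : Finset (Idx n)} :
    F ∈ ((Finset.univ : Finset (Idx n)).powerset.filter (fun F =>
      (∀ j ∈ F, coal j ⊆ S) ∧
      ∀ j ∈ F, ∀ j' ∈ F, j ≠ j' → Disjoint (coal j) (coal j'))) ↔ Feas S F := by
  simp [Feas, Finset.mem_filter, Finset.mem_powerset, Finset.subset_univ]

lemma Feas.empty {n : ℕ} (S : Finset (Player n)) : Feas S (∅ : Finset (Idx n)) := by
  constructor <;> simp

lemma packV_ge {n : ℕ} (K w : ℝ) {S : Finset (Player n)} {F : Finset (Idx n)}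
    (hF : Feas S F) : ∑ j ∈ F, wt K w j ≤ packV n K w S := by
  unfold packV
  exact Finset.le_sup' (fun F => ∑ j ∈ F, wt K w j) (mem_packing_filter.mpr hF)

lemma packV_nonneg {n : ℕ} (K w : ℝ) (S : Finset (Player n)) : 0 ≤ packV n K w S := by
  simpa using packV_ge K w (Feas.empty S)

lemma packV_le {n : ℕ} (K w : ℝ) {S : Finset (Player n)} {M : ℝ}
    (h : ∀ F : Finset (Idx n), Feas S F → ∑ j ∈ F, wt K w j ≤ M) : packV n K w S ≤ M := by
  unfold packV
  apply Finset.sup'_le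
  intro F hF
  exact h F (mem_packing_filter.mp hF)

lemma packV_exists {n : ℕ} (K w : ℝ) (S : Finset (Player n)) :
    ∃ F : Finset (Idx n), Feas S F ∧ packV n K w S = ∑ j ∈ F, wt K w j := by
  obtain ⟨F, hmem, heq⟩ := Finset.exists_mem_eq_sup'
    (⟨∅, by simp⟩ : (((Finset.univ : Finset (Idx n)).powerset.filter (fun F =>
      (∀ j ∈ F, coal j ⊆ S) ∧
      ∀ j ∈ F, ∀ j' ∈ F, j ≠ j' → Disjoint (coal j) (coal j')))).Nonempty)
    (fun F => ∑ j ∈ F, wt K w j)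
  exact ⟨F, mem_packing_filter.mp hmem, by unfold packV; exact heq⟩

lemma sum_decomp {n : ℕ} (f : Player n → ℝ) (S : Finset (Player n)) (F : Finset (Idx n))
    (hF : Feas S F) :
    ∑ p ∈ S, f p = (∑ j ∈ F, ∑ p ∈ coal j, f p) + ∑ p ∈ S \ F.biUnion coal, f p := by
  have hsub : F.biUnion coal ⊆ S := Finset.biUnion_subset.mpr hF.1
  have hdisj : (↑F : Set (Idx n)).PairwiseDisjoint coal := by
    intro a ha b hb hab
    exact hF.2 a (by simpa using ha) b (by simpa using hb) hab
  rw [← Finset.sum_biUnion hdisj, ← Finset.sum_sdiff hsub]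
  ring

lemma packV_le_sum {n : ℕ} (K w : ℝ) (u : Player n → ℝ) (hu0 : ∀ p, 0 ≤ u p)
    (huc : ∀ j : Idx n, wt K w j ≤ ∑ p ∈ coal j, u p) (S : Finset (Player n)) :
    packV n K w S ≤ ∑ p ∈ S, u p := by
  apply packV_le
  intro F hF
  calc ∑ j ∈ F, wt K w j ≤ ∑ j ∈ F, ∑ p ∈ coal j, u p :=
        Finset.sum_le_sum fun j _ => huc j
    _ ≤ (∑ j ∈ F, ∑ p ∈ coal j, u p) + ∑ p ∈ S \ F.biUnion coal, u p := by
        have : 0 ≤ ∑ p ∈ S \ F.biUnion coal, u p := Finset.sum_nonneg fun p _ => hu0 p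
        linarith
    _ = ∑ p ∈ S, u p := (sum_decomp u S F hF).symm

/-- sums over the explicit coalitions -/
lemma sum_coal_root {n : ℕ} (f : Player n → ℝ) :
    ∑ p ∈ coal (Idx.root : Idx n), f p = f .r := by simp [coal]

lemma sum_coal_rootP {n : ℕ} (f : Player n → ℝ) (i : Fin 4) :
    ∑ p ∈ coal (Idx.rootP i : Idx n), f p = f .r + f (.p 0 i) := by
  simp [coal]

lemma sum_coal_pair {n : ℕ} (f : Player n → ℝ) (l : Fin (n+2)) (i : Fin 4) :
    ∑ p ∈ coal (Idx.pair l i : Idx n), f p = f (.p l i) + f (.q l i) := by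
  simp [coal]

lemma sum_coal_quad {n : ℕ} (f : Player n → ℝ) (l : Fin (n+1)) (i : Fin 4) :
    ∑ p ∈ coal (Idx.quad l i : Idx n), f p =
      f (.q l.castSucc 0) + f (.q l.castSucc 1) + f (.q l.castSucc 2) + f (.q l.castSucc 3)
        + f (.p l.succ i) := by
  have h01 : (0 : Fin 4) ≠ 1 := by decide
  have h02 : (0 : Fin 4) ≠ 2 := by decide
  have h03 : (0 : Fin 4) ≠ 3 := by decide
  have h12 : (1 : Fin 4) ≠ 2 := by decide
  have h13 : (1 : Fin 4) ≠ 3 := by decide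
  have h23 : (2 : Fin 4) ≠ 3 := by decide
  simp [coal, Finset.sum_insert, Finset.mem_insert, h01, h02, h03, h12, h13, h23]
  ring

def playerEquiv (n : ℕ) : Player n ≃ (Unit ⊕ (Fin (n+2) × Fin 4) ⊕ (Fin (n+2) × Fin 4)) where
  toFun := fun x => match x with
    | .r => .inl ()
    | .p l i => .inr (.inl (l, i))
    | .q l i => .inr (.inr (l, i))
  invFun := fun x => match x with
    | .inl _ => .r
    | .inr (.inl (l, i)) => .p l i
    | .inr (.inr (l, i)) => .q l i
  left_inv := by rintro (_ | _ | _) <;> rfl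
  right_inv := by rintro ((_) | (⟨l, i⟩ | ⟨l, i⟩)) <;> rfl

lemma sum_player {n : ℕ} (f : Player n → ℝ) :
    ∑ x, f x = f .r + ((∑ l, ∑ i, f (.p l i)) + (∑ l, ∑ i, f (.q l i))) := by
  rw [← Equiv.sum_comp (playerEquiv n).symm f]
  simp [playerEquiv, Fintype.sum_sum_type, Fintype.sum_prod_type]

noncomputable def ytF (n : ℕ) (ε K : ℝ) : Player n → ℝ
  | .r => 1 - ε
  | .p l _ => ((l.1 : ℝ) + 1) * K + 2 ^ ((l.1 : ℤ) - 1) * ε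
  | .q l _ => ((l.1 : ℝ) + 1) * K - 2 ^ ((l.1 : ℤ) - 1) * ε

noncomputable def mu (ε K : ℝ) {n : ℕ} (l : Fin (n + 2)) : ℝ :=
  ((l.1 : ℝ) + 1) * K - 2 ^ ((l.1 : ℤ) - 1) * ε

section Arith

variable {n : ℕ} {ε K : ℝ}

lemma hK0 (hε0 : 0 < ε) (hK : 2 ^ n * ε ≤ K) : 0 < K :=
  lt_of_lt_of_le (by positivity) hK

lemma pow_le (hε0 : 0 < ε) (hK : 2 ^ n * ε ≤ K) {a : ℤ} (ha : a ≤ n) : (2 : ℝ) ^ a * ε ≤ K := by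
  have h1 : (2 : ℝ) ^ a ≤ (2 : ℝ) ^ (n : ℤ) := zpow_le_zpow_right₀ one_le_two ha
  have h2 : (2 : ℝ) ^ (n : ℤ) = 2 ^ n := zpow_natCast 2 n
  nlinarith [hε0.le]

lemma pow_pos' (hε0 : 0 < ε) (a : ℤ) : 0 < (2 : ℝ) ^ a * ε := by positivity

lemma fin_pow_le (hε0 : 0 < ε) (hK : 2 ^ n * ε ≤ K) (l : Fin (n + 2)) :
    (2 : ℝ) ^ ((l.1 : ℤ) - 1) * ε ≤ K := by
  apply pow_le hε0 hK
  have := l.2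
  omega

lemma mu_mono (hε0 : 0 < ε) (hK : 2 ^ n * ε ≤ K) {l l' : Fin (n + 2)} (h : l ≤ l') :
    mu ε K l ≤ mu ε K l' := by
  rcases eq_or_lt_of_le (Fin.le_def.mp h) with h' | h'
  · unfold mu; rw [h']
  · have h1 : (2 : ℝ) ^ ((l'.1 : ℤ) - 1) * ε ≤ K := fin_pow_le hε0 hK l'
    have h2 : 0 < (2 : ℝ) ^ ((l.1 : ℤ) - 1) * ε := pow_pos' hε0 _
    have h3 : (l.1 : ℝ) + 1 ≤ l'.1 := by exact_mod_cast h'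
    have h4 : 0 < K := hK0 hε0 hK
    unfold mu
    nlinarith

lemma ytF_nonneg (hε0 : 0 < ε) (hε1 : ε ≤ 1) (hK : 2 ^ n * ε ≤ K) (x : Player n) :
    0 ≤ ytF n ε K x := by
  have h4 : 0 < K := hK0 hε0 hK
  cases x with
  | r => simp [ytF]; linarith
  | p l i =>
    have h2 : 0 < (2 : ℝ) ^ ((l.1 : ℤ) - 1) * ε := pow_pos' hε0 _
    have : (0 : ℝ) ≤ (l.1 : ℝ) := Nat.cast_nonneg _
    simp only [ytF]
    nlinarith
  | q l i =>
    have h1 := fin_pow_le hε0 hK l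
    have : (0 : ℝ) ≤ (l.1 : ℝ) := Nat.cast_nonneg _
    simp only [ytF]
    nlinarith

lemma wt_le_coal_ytF (hε0 : 0 < ε) (hε1 : ε ≤ 1) (hK : 2 ^ n * ε ≤ K) (j : Idx n) :
    wt K (1 - ε) j ≤ ∑ p ∈ coal j, ytF n ε K p := by
  have h4 : 0 < K := hK0 hε0 hK
  have hεK : ε ≤ K := by
    have := pow_le hε0 hK (a := 0) (by positivity)
    simpa using this
  cases j with
  | root => rw [sum_coal_root]; simp [wt, ytF]
  | rootP i =>
    rw [sum_coal_rootP]
    simp only [wt, ytF]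
    norm_num
    nlinarith
  | pair l i =>
    rw [sum_coal_pair]
    simp only [wt, ytF]
    ring_nf
    nlinarith [pow_pos' hε0 ((l.1 : ℤ) - 1)]
  | quad l i =>
    rw [sum_coal_quad]
    simp only [wt, ytF, Fin.coe_castSucc, Fin.val_succ]
    have hc : ((l.1 + 1 : ℕ) : ℝ) = (l.1 : ℝ) + 1 := by push_cast; ring
    rw [hc]
    have e1 : ((l.1 + 1 : ℕ) : ℤ) - 1 = (l.1 : ℤ) := by omega
    have hp1 : (2:ℝ) ^ ((l.1:ℤ) - 1) * ε > 0 := pow_pos' hε0 _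
    have hp2 : (2:ℝ) ^ ((l.1:ℤ)) * ε ≤ K := pow_le hε0 hK (by have := l.2; omega)
    rw [e1]
    have e3 : (2:ℝ) ^ ((l.1:ℤ)) = 2 * 2 ^ ((l.1:ℤ) - 1) := by
      rw [show (l.1:ℤ) = ((l.1:ℤ) - 1) + 1 by ring, zpow_add_one₀ (two_ne_zero)]
      ring
    rw [e3] at hp2
    nlinarith [hp1, hp2]
end Arith

section Core

variable {n : ℕ} {ε K : ℝ}

lemma ytF_core (hε0 : 0 < ε) (hε1 : ε ≤ 1) (hK : 2 ^ n * ε ≤ K) (S : Finset (Player n)) :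
    packV n K (1 - ε) S ≤ ∑ p ∈ S, ytF n ε K p :=
  packV_le_sum K (1 - ε) _ (ytF_nonneg hε0 hε1 hK) (wt_le_coal_ytF hε0 hε1 hK) S

/-- the full packing: root plus all pairs -/
def Ffull (n : ℕ) : Finset (Idx n) :=
  insert Idx.root ((Finset.univ : Finset (Fin (n + 2) × Fin 4)).image fun li => Idx.pair li.1 li.2)

lemma mem_Ffull {j : Idx n} : j ∈ Ffull n ↔ j = Idx.root ∨ ∃ l i, j = Idx.pair l i := by
  simp [Ffull, eq_comm]

lemma Ffull_feas : Feas (Finset.univ : Finset (Player n)) (Ffull n) := by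
  constructor
  · intro j _; exact Finset.subset_univ _
  · intro j hj j' hj' hne
    rw [mem_Ffull] at hj hj'
    rw [Finset.disjoint_left]
    rcases hj with rfl | ⟨l, i, rfl⟩ <;> rcases hj' with rfl | ⟨l', i', rfl⟩
    · exact absurd rfl hne
    · intro a ha ha'
      simp [coal] at ha ha'
      rcases ha' with h | h <;> simp [ha] at h
    · intro a ha ha'
      simp [coal] at ha ha'
      rcases ha with h | h <;> simp [h] at ha'
    · intro a ha ha'
      simp [coal] at ha ha'
      rcases ha with rfl | rfl <;> rcases ha' with h | h <;>
        simp_all <;> exact hne (by simp_all)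
    
lemma sum_Ffull : ∑ j ∈ Ffull n, wt K (1 - ε) j
    = (1 - ε) + ∑ l : Fin (n + 2), ∑ i : Fin 4, 2 * ((l.1 : ℝ) + 1) * K := by
  unfold Ffull
  have hinj : ∀ a ∈ (Finset.univ : Finset (Fin (n + 2) × Fin 4)), ∀ b ∈ Finset.univ,
      (Idx.pair a.1 a.2 : Idx n) = Idx.pair b.1 b.2 → a = b := by
    intro a _ b _ h
    cases a; cases b
    simpa [Prod.ext_iff] using h
  rw [Finset.sum_insert (by simp), Finset.sum_image hinj, Fintype.sum_prod_type]
  simp [wt]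

lemma sum_ytF : ∑ x, ytF n ε K x
    = (1 - ε) + ∑ l : Fin (n + 2), ∑ i : Fin 4, 2 * ((l.1 : ℝ) + 1) * K := by
  rw [sum_player]
  have : ∀ l : Fin (n + 2), ∀ i : Fin 4,
      ytF n ε K (.p l i) + ytF n ε K (.q l i) = 2 * ((l.1 : ℝ) + 1) * K := by
    intro l i; simp only [ytF]; ring
  rw [← Finset.sum_add_distrib]
  simp only [← Finset.sum_add_distrib, this]
  simp [ytF]

lemma packV_univ (hε0 : 0 < ε) (hε1 : ε ≤ 1) (hK : 2 ^ n * ε ≤ K) :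
    packV n K (1 - ε) (Finset.univ : Finset (Player n)) = ∑ x, ytF n ε K x := by
  apply le_antisymm (ytF_core hε0 hε1 hK _)
  calc ∑ x, ytF n ε K x = ∑ j ∈ Ffull n, wt K (1 - ε) j := by rw [sum_Ffull, sum_ytF]
    _ ≤ _ := packV_ge K (1 - ε) Ffull_feas

end Core

section Main

variable {n : ℕ} {ε K : ℝ}

lemma feas_single {S : Finset (Player n)} {j : Idx n} (h : coal j ⊆ S) : Feas S {j} := by
  constructor
  · intro j' hj'; simp at hj'; subst hj'; exact h
  · intro a ha b hb hne
    simp at ha hb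
    subst ha; subst hb; exact absurd rfl hne

lemma z_r_ge {z : Player n → ℝ} (hcore : ∀ S, packV n K (1 - ε) S ≤ ∑ p ∈ S, z p) :
    1 - ε ≤ z .r := by
  have h1 : (1 - ε) ≤ packV n K (1 - ε) ({Player.r} : Finset (Player n)) := by
    have hfs : Feas ({Player.r} : Finset (Player n)) {Idx.root} :=
      feas_single (by simp [coal])
    simpa [wt] using packV_ge K (1 - ε) hfs
  have h2 := hcore {Player.r}
  simp at h2
  linarith

lemma z_pair_ge {z : Player n → ℝ} (hcore : ∀ S, packV n K (1 - ε) S ≤ ∑ p ∈ S, z p)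
    (l : Fin (n + 2)) (i : Fin 4) :
    2 * ((l.1 : ℝ) + 1) * K ≤ z (.p l i) + z (.q l i) := by
  have hfs : Feas (coal (Idx.pair l i)) {Idx.pair l i} := feas_single (subset_refl _)
  have h1 := packV_ge K (1 - ε) hfs
  simp only [Finset.sum_singleton, wt] at h1
  have h2 := hcore (coal (Idx.pair l i))
  rw [sum_coal_pair] at h2
  linarith

lemma tight (hε0 : 0 < ε) (hε1 : ε ≤ 1) (hK : 2 ^ n * ε ≤ K) (z : Player n → ℝ)
    (hz : ∑ x, z x = packV n K (1 - ε) (Finset.univ : Finset (Player n)))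
    (hcore : ∀ S, packV n K (1 - ε) S ≤ ∑ p ∈ S, z p) :
    z .r = 1 - ε ∧ ∀ l i, z (.p l i) + z (.q l i) = 2 * ((l.1 : ℝ) + 1) * K := by
  have hsum : ∑ x, z x = (1 - ε) + ∑ l : Fin (n + 2), ∑ i : Fin 4, 2 * ((l.1 : ℝ) + 1) * K := by
    rw [hz, packV_univ hε0 hε1 hK, sum_ytF]
  rw [sum_player] at hsum
  have hr := z_r_ge hcore
  have hp := z_pair_ge hcore
  have hgsum : ∑ l : Fin (n + 2), ∑ i : Fin 4,
      ((z (.p l i) + z (.q l i)) - 2 * ((l.1 : ℝ) + 1) * K) = (1 - ε) - z .r := by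
    simp only [Finset.sum_sub_distrib, Finset.sum_add_distrib]
    linarith [hsum]
  have hgnonneg : ∀ l ∈ (Finset.univ : Finset (Fin (n + 2))), ∀ i ∈ (Finset.univ : Finset (Fin 4)),
      0 ≤ (z (.p l i) + z (.q l i)) - 2 * ((l.1 : ℝ) + 1) * K := fun l _ i _ => by
    linarith [hp l i]
  have hout : ∀ l ∈ (Finset.univ : Finset (Fin (n + 2))),
      0 ≤ ∑ i : Fin 4, ((z (.p l i) + z (.q l i)) - 2 * ((l.1 : ℝ) + 1) * K) := fun l hl =>
    Finset.sum_nonneg (fun i hi => hgnonneg l hl i hi)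
  have htot : 0 ≤ ∑ l : Fin (n + 2), ∑ i : Fin 4,
      ((z (.p l i) + z (.q l i)) - 2 * ((l.1 : ℝ) + 1) * K) := Finset.sum_nonneg hout
  have hzr : z .r = 1 - ε := by linarith [hgsum, htot]
  refine ⟨hzr, ?_⟩
  have hzero : ∑ l : Fin (n + 2), ∑ i : Fin 4,
      ((z (.p l i) + z (.q l i)) - 2 * ((l.1 : ℝ) + 1) * K) = 0 := by
    rw [hgsum, hzr]; ring
  intro l i
  have h1 := (Finset.sum_eq_zero_iff_of_nonneg hout).mp hzero l (Finset.mem_univ l)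
  have h2 := (Finset.sum_eq_zero_iff_of_nonneg (fun i hi => hgnonneg l (Finset.mem_univ l) i hi)).mp
    h1 i (Finset.mem_univ i)
  linarith

end Main

section Key

variable {n : ℕ} {ε K : ℝ}

lemma mu_rootP (hε0 : 0 < ε) :
    ∑ p ∈ coal (Idx.rootP i : Idx n), ytF n ε K p - wt K (1 - ε) (Idx.rootP i : Idx n)
      = mu ε K (0 : Fin (n + 2)) := by
  rw [sum_coal_rootP]
  simp only [ytF, wt, mu]
  have h0 : ((0 : Fin (n + 2)).1 : ℝ) = 0 := by simp
  have h0' : ((0 : Fin (n + 2)).1 : ℤ) = 0 := by simp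
  rw [h0, h0']
  have : (2 : ℝ) ^ ((0:ℤ) - 1) = 1 / 2 := by norm_num
  rw [this]
  ring

lemma mu_quad (l : Fin (n + 1)) (i : Fin 4) :
    ∑ p ∈ coal (Idx.quad l i : Idx n), ytF n ε K p - wt K (1 - ε) (Idx.quad l i : Idx n)
      = mu ε K l.succ := by
  rw [sum_coal_quad]
  simp only [ytF, wt, mu, Fin.coe_castSucc, Fin.val_succ]
  have hc : ((l.1 + 1 : ℕ) : ℝ) = (l.1 : ℝ) + 1 := by push_cast; ring
  have e1 : ((l.1 + 1 : ℕ) : ℤ) - 1 = (l.1 : ℤ) := by omega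
  rw [hc, e1]
  have e3 : (2:ℝ) ^ ((l.1:ℤ)) = 2 * 2 ^ ((l.1:ℤ) - 1) := by
    rw [show (l.1:ℤ) = ((l.1:ℤ) - 1) + 1 by ring, zpow_add_one₀ (two_ne_zero)]
    ring
  rw [e3]
  ring

lemma key_eq (hε0 : 0 < ε) (hε1 : ε ≤ 1) (hK : 2 ^ n * ε ≤ K) (z : Player n → ℝ)
    (m : Fin (n + 2))
    (htr : z .r = 1 - ε)
    (htp : ∀ l i, z (.p l i) + z (.q l i) = 2 * ((l.1 : ℝ) + 1) * K)
    (hagree : ∀ l, l < m → ∀ i, z (.p l i) = ytF n ε K (.p l i))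
    (S : Finset (Player n))
    (hS : ∑ p ∈ S, ytF n ε K p - packV n K (1 - ε) S < mu ε K m) :
    ∑ p ∈ S, z p = ∑ p ∈ S, ytF n ε K p := by
  have hagq : ∀ l, l < m → ∀ i, z (.q l i) = ytF n ε K (.q l i) := by
    intro l hl i
    have h1 := htp l i
    have h2 := hagree l hl i
    have h3 : ytF n ε K (.p l i) + ytF n ε K (.q l i) = 2 * ((l.1 : ℝ) + 1) * K := by
      simp only [ytF]; ring
    linarith
  obtain ⟨F, hF, hv⟩ := packV_exists K (1 - ε) S
  have hdy := sum_decomp (ytF n ε K) S F hF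
  have hdz := sum_decomp z S F hF
  set U := F.biUnion coal with hU
  -- excess decomposition
  have hterm : ∀ j ∈ F, ∑ p ∈ coal j, ytF n ε K p - wt K (1 - ε) j < mu ε K m := by
    intro j hj
    have h1 : ∑ j' ∈ F, (∑ p ∈ coal j', ytF n ε K p - wt K (1 - ε) j')
        + ∑ p ∈ S \ U, ytF n ε K p < mu ε K m := by
      rw [Finset.sum_sub_distrib]
      rw [hv] at hS
      linarith [hdy]
    have h2 : ∑ p ∈ coal j, ytF n ε K p - wt K (1 - ε) j
        ≤ ∑ j' ∈ F, (∑ p ∈ coal j', ytF n ε K p - wt K (1 - ε) j') := by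
      exact Finset.single_le_sum (f := fun j' => ∑ p ∈ coal j', ytF n ε K p - wt K (1 - ε) j')
        (fun j' _ => sub_nonneg.mpr (wt_le_coal_ytF hε0 hε1 hK j')) hj
    have h3 : 0 ≤ ∑ p ∈ S \ U, ytF n ε K p :=
      Finset.sum_nonneg fun p _ => ytF_nonneg hε0 hε1 hK p
    linarith
  have hleft : ∀ x ∈ S \ U, ytF n ε K x < mu ε K m := by
    intro x hx
    have h1 : ∑ j' ∈ F, (∑ p ∈ coal j', ytF n ε K p - wt K (1 - ε) j')
        + ∑ p ∈ S \ U, ytF n ε K p < mu ε K m := by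
      rw [Finset.sum_sub_distrib]
      rw [hv] at hS
      linarith [hdy]
    have h2 : ytF n ε K x ≤ ∑ p ∈ S \ U, ytF n ε K p :=
      Finset.single_le_sum (fun p _ => ytF_nonneg hε0 hε1 hK p) hx
    have h3 : 0 ≤ ∑ j' ∈ F, (∑ p ∈ coal j', ytF n ε K p - wt K (1 - ε) j') :=
      Finset.sum_nonneg fun j' _ => sub_nonneg.mpr (wt_le_coal_ytF hε0 hε1 hK j')
    linarith
  -- now show the two decomposed sums agree
  rw [hdy, hdz]
  congr 1
  · apply Finset.sum_congr rfl
    intro j hj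
    cases j with
    | root => rw [sum_coal_root, sum_coal_root, htr]; rfl
    | rootP i =>
      have ht := hterm _ hj
      rw [mu_rootP hε0] at ht
      have h0m : (0 : Fin (n + 2)) < m := by
        by_contra h
        push_neg at h
        exact absurd (mu_mono hε0 hK h) (not_le.mpr ht)
      rw [sum_coal_rootP, sum_coal_rootP, htr, hagree 0 h0m i]
      simp only [ytF]
    | pair l i =>
      rw [sum_coal_pair, sum_coal_pair, htp l i]
      simp only [ytF]; ring
    | quad l i =>
      have ht := hterm _ hj
      rw [mu_quad] at ht
      have hsm : l.succ < m := by
        by_contra h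
        push_neg at h
        have := mu_mono hε0 hK h
        linarith
      have hcm : l.castSucc < m := by
        rw [Fin.lt_def] at hsm ⊢
        simp only [Fin.coe_castSucc, Fin.val_succ] at hsm ⊢
        omega
      rw [sum_coal_quad, sum_coal_quad, hagree _ hsm i,
        hagq _ hcm 0, hagq _ hcm 1, hagq _ hcm 2, hagq _ hcm 3]
  · apply Finset.sum_congr rfl
    intro x hx
    have ht := hleft x hx
    cases x with
    | r => rw [htr]; rfl
    | p l i =>
      have hlm : l < m := by
        by_contra h
        push_neg at h
        have h1 := mu_mono hε0 hK h
        have h2 : mu ε K l ≤ ytF n ε K (.p l i) := by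
          simp only [ytF, mu]
          have := pow_pos' hε0 ((l.1 : ℤ) - 1)
          nlinarith [hε0]
        linarith
      exact hagree l hlm i
    | q l i =>
      have hlm : l < m := by
        by_contra h
        push_neg at h
        have h1 := mu_mono hε0 hK h
        have h2 : mu ε K l = ytF n ε K (.q l i) := by simp only [ytF, mu]
        linarith
      exact hagq l hlm i

end Key

section Witness

variable {n : ℕ} {ε K : ℝ}

lemma packV_single_q (m : Fin (n + 2)) (j0 : Fin 4) :
    packV n K (1 - ε) ({Player.q m j0} : Finset (Player n)) = 0 := by
  apply le_antisymm _ (packV_nonneg _ _ _)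
  apply packV_le
  intro F hF
  have hFe : F = ∅ := by
    rw [Finset.eq_empty_iff_forall_notMem]
    intro j hj
    have hsub := hF.1 j hj
    cases j with
    | root => simpa [coal] using hsub
    | rootP i =>
      have h := hsub (show Player.r ∈ coal (Idx.rootP i) by simp [coal])
      simp at h
    | pair l i =>
      have h := hsub (show Player.p l i ∈ coal (Idx.pair l i) by simp [coal])
      simp at h
    | quad l i =>
      simp only [coal, Finset.insert_subset_iff, Finset.singleton_subset_iff,
        Finset.mem_singleton, Player.q.injEq, Player.p.injEq] at hsub
      obtain ⟨⟨_, h0⟩, ⟨_, h1⟩, _⟩ := hsub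
      rw [← h0] at h1
      exact absurd h1 (by decide)
  subst hFe
  simp

lemma packV_rootP_le (hε0 : 0 < ε) (hε1 : ε ≤ 1) (j0 : Fin 4) :
    packV n K (1 - ε) ({Player.r, Player.p 0 j0} : Finset (Player n)) ≤ 1 := by
  apply packV_le
  intro F hF
  have hmem : ∀ j ∈ F, j = Idx.root ∨ j = Idx.rootP j0 := by
    intro j hj
    have hsub := hF.1 j hj
    cases j with
    | root => left; rfl
    | rootP i =>
      right
      simp only [coal, Finset.insert_subset_iff, Finset.singleton_subset_iff,
        Finset.mem_insert, Finset.mem_singleton, Player.p.injEq] at hsub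
      rcases hsub.2 with h | ⟨_, h⟩
      · exact absurd h (by simp)
      · rw [h]
    | pair l i =>
      exfalso
      simp only [coal, Finset.insert_subset_iff, Finset.singleton_subset_iff,
        Finset.mem_insert, Finset.mem_singleton] at hsub
      rcases hsub.2 with h | h <;> simp at h
    | quad l i =>
      exfalso
      simp only [coal, Finset.insert_subset_iff, Finset.singleton_subset_iff,
        Finset.mem_insert, Finset.mem_singleton] at hsub
      rcases hsub.1 with h | h <;> simp at h
  by_cases hr : Idx.root ∈ F
  · have hnp : Idx.rootP j0 ∉ F := by
      intro hp
      have hd := hF.2 _ hr _ hp (by simp)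
      rw [Finset.disjoint_left] at hd
      have h1 : Player.r ∈ coal (Idx.root : Idx n) := by simp [coal]
      have h2 : Player.r ∈ coal (Idx.rootP j0 : Idx n) := by simp [coal]
      exact hd h1 h2
    have hFsub : F ⊆ {Idx.root} := by
      intro j hj
      rcases hmem j hj with rfl | rfl
      · simp
      · exact absurd hj hnp
    rcases Finset.subset_singleton_iff.mp hFsub with rfl | rfl
    · simp
    · simp [wt]; linarith
  · have hFsub : F ⊆ {Idx.rootP j0} := by
      intro j hj
      rcases hmem j hj with rfl | rfl
      · exact absurd hj hr
      · simp
    rcases Finset.subset_singleton_iff.mp hFsub with rfl | rfl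
    · simp
    · simp [wt]

lemma packV_quadset_le (hε0 : 0 < ε) (hK : 2 ^ n * ε ≤ K) (k : Fin (n + 1)) (j0 : Fin 4) :
    packV n K (1 - ε) (coal (Idx.quad k j0)) ≤ 4 * ((k.1 : ℝ) + 1) * K := by
  have hKpos : 0 < K := hK0 hε0 hK
  apply packV_le
  intro F hF
  have hFsub : F ⊆ {Idx.quad k j0} := by
    intro j hj
    have hsub := hF.1 j hj
    rw [Finset.mem_singleton]
    cases j with
    | root =>
      exfalso
      simp only [coal, Finset.singleton_subset_iff, Finset.mem_insert,
        Finset.mem_singleton] at hsub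
      rcases hsub with h | h | h | h | h <;> simp at h
    | rootP i =>
      exfalso
      simp only [coal, Finset.insert_subset_iff] at hsub
      have := hsub.1
      simp only [Finset.mem_insert, Finset.mem_singleton] at this
      rcases this with h | h | h | h | h <;> simp at h
    | pair l i =>
      exfalso
      have hpmem : Player.p l i ∈ coal (Idx.quad k j0) := hsub (by simp [coal])
      have hqmem : Player.q l i ∈ coal (Idx.quad k j0) := hsub (by simp [coal])
      simp only [coal, Finset.mem_insert, Finset.mem_singleton, Player.p.injEq,
        Player.q.injEq, reduceCtorEq, false_or, or_false, false_and, and_false] at hpmem hqmem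
      have hl : l = k.succ := hpmem.1
      have hl2 : l = k.castSucc := by
        rcases hqmem with ⟨h, _⟩ | ⟨h, _⟩ | ⟨h, _⟩ | ⟨h, _⟩ <;> exact h
      rw [hl] at hl2
      have := congrArg Fin.val hl2
      simp [Fin.val_succ] at this
    | quad l i =>
      simp only [coal, Finset.insert_subset_iff, Finset.singleton_subset_iff,
        Finset.mem_insert, Finset.mem_singleton, Player.p.injEq, Player.q.injEq] at hsub
      obtain ⟨h0, _, _, _, hp⟩ := hsub
      have hlk : l = k := by
        rcases h0 with ⟨h, _⟩ | ⟨h, _⟩ | ⟨h, _⟩ | ⟨h, _⟩ | h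
        · exact Fin.castSucc_injective _ h
        · exact Fin.castSucc_injective _ h
        · exact Fin.castSucc_injective _ h
        · exact Fin.castSucc_injective _ h
        · simp at h
      subst hlk
      rcases hp with h | h | h | h | ⟨_, h⟩
      · simp at h
      · simp at h
      · simp at h
      · simp at h
      · rw [h]
  rcases Finset.subset_singleton_iff.mp hFsub with rfl | rfl
  · simp; positivity
  · simp [wt]

end Witness
open List in
lemma sorted_lex_of_crossing : ∀ (A B : List ℝ), A.Pairwise (· ≤ ·) → B.Pairwise (· ≤ ·) →
    A.length = B.length →
    ∀ t : ℝ, B.countP (fun x => decide (x < t)) < A.countP (fun x => decide (x < t)) →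
    (∀ s : ℝ, s ≤ t → B.countP (fun x => decide (x < s)) ≤ A.countP (fun x => decide (x < s))) →
    List.Lex (· < ·) A B := by
  intro A
  induction A with
  | nil =>
    intro B _ _ hlen t h1 _
    have : B = [] := by simpa using hlen.symm
    subst this; simp at h1
  | cons x A' ih =>
    intro B hA hB hlen t h1 h2
    match B with
    | [] => simp at hlen
    | y :: B' =>
      rcases lt_trichotomy x y with hxy | hxy | hxy
      · exact List.Lex.rel hxy
      · subst hxy
        apply List.Lex.cons
        apply ih B' (List.pairwise_cons.mp hA).2 (List.pairwise_cons.mp hB).2 (by simpa using hlen) t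
        · have e1 := List.countP_cons (p := fun z => decide (z < t)) (a := x) (l := A')
          have e2 := List.countP_cons (p := fun z => decide (z < t)) (a := x) (l := B')
          simp only [e1, e2] at h1
          omega
        · intro s hs
          have e1 := List.countP_cons (p := fun z => decide (z < s)) (a := x) (l := A')
          have e2 := List.countP_cons (p := fun z => decide (z < s)) (a := x) (l := B')
          have := h2 s hs
          simp only [e1, e2] at this
          omega
      · exfalso
        -- x > y; use s = x
        have hxt : x < t := by
          have hpos : 0 < (x :: A').countP (fun z => decide (z < t)) := by omega
          rw [List.countP_pos_iff] at hpos
          obtain ⟨a, ha, hat⟩ := hpos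
          have hat : a < t := by simpa using hat
          have : x ≤ a := by
            rcases List.mem_cons.mp ha with h | h
            · exact le_of_eq h.symm
            · exact (List.pairwise_cons.mp hA).1 a h
          exact lt_of_le_of_lt this hat
        have hs := h2 x (le_of_lt hxt)
        have hB0 : 1 ≤ (y :: B').countP (fun z => decide (z < x)) := by
          have : 0 < (y :: B').countP (fun z => decide (z < x)) := by
            rw [List.countP_pos_iff]
            exact ⟨y, List.mem_cons_self, by simpa using hxy⟩
          omega
        have hA0 : (x :: A').countP (fun z => decide (z < x)) = 0 := by
          rw [List.countP_eq_zero]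
          intro a ha
          have : x ≤ a := by
            rcases List.mem_cons.mp ha with h | h
            · exact le_of_eq h.symm
            · exact (List.pairwise_cons.mp hA).1 a h
          simpa using not_lt.mpr this
        omega

lemma ml_multiset (a b : Multiset ℝ) (hcard : Multiset.card a = Multiset.card b) (t : ℝ)
    (h1 : b.countP (fun x => x < t) < a.countP (fun x => x < t))
    (h2 : ∀ s : ℝ, s ≤ t →
      b.countP (fun x => x < s) ≤ a.countP (fun x => x < s)) :
    List.Lex (· < ·) (a.sort (· ≤ ·)) (b.sort (· ≤ ·)) := by
  have key : ∀ (c : Multiset ℝ) (s : ℝ),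
      (c.sort (· ≤ ·)).countP (fun x => decide (x < s)) = c.countP (fun x => x < s) := by
    intro c s
    conv_rhs => rw [← Multiset.sort_eq c (· ≤ ·)]
    rw [Multiset.coe_countP]
  apply sorted_lex_of_crossing _ _ (Multiset.pairwise_sort a _) (Multiset.pairwise_sort b _)
    (by simp [hcard]) t
  · rw [key, key]; exact h1
  · intro s hs; rw [key, key]; exact h2 s hs

lemma countP_excess {n : ℕ} (v : Finset (Player n) → ℝ) (y : Player n → ℝ) (s : ℝ) :
    (((Finset.univ : Finset (Player n)).powerset.val.map
        fun S => (∑ p ∈ S, y p) - v S).countP (fun x => x < s))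
    = ((Finset.univ : Finset (Player n)).powerset.filter
        (fun S => (∑ p ∈ S, y p) - v S < s)).card := by
  rw [Multiset.countP_map]
  rfl


/-- The allocation `ỹ` with `ỹ(r) = 1 − ε`,
`ỹ(p_i^{(l)}) = l·K + 2^{l−2}·ε` and `ỹ(q_i^{(l)}) = l·K − 2^{l−2}·ε` is the nucleolus of
the perturbed packing game `(P, ṽ)` (root weight `1 − ε`, with `0 < ε ≤ 1` and
`K ≥ 2^n·ε`): it is efficient, and its sorted excess vector is lexicographically maximal
among all efficient allocations. -/
theorem stmt17 (n : ℕ) (ε K : ℝ) (hε0 : 0 < ε) (hε1 : ε ≤ 1) (hK : 2 ^ n * ε ≤ K)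
    (yt : Player n → ℝ)
    (hyr : yt Player.r = 1 - ε)
    (hyp : ∀ (l : Fin (n + 2)) (i : Fin 4),
      yt (Player.p l i) = ((l.1 : ℝ) + 1) * K + 2 ^ ((l.1 : ℤ) - 1) * ε)
    (hyq : ∀ (l : Fin (n + 2)) (i : Fin 4),
      yt (Player.q l i) = ((l.1 : ℝ) + 1) * K - 2 ^ ((l.1 : ℤ) - 1) * ε) :
    (∑ p, yt p) = packV n K (1 - ε) Finset.univ ∧
    ∀ z : Player n → ℝ, (∑ p, z p) = packV n K (1 - ε) Finset.univ →
      lexLE (excessList n (packV n K (1 - ε)) z) (excessList n (packV n K (1 - ε)) yt) := by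
  classical
  have hyt : yt = ytF n ε K := by
    funext x
    cases x with
    | r => rw [hyr]; rfl
    | p l i => rw [hyp]; rfl
    | q l i => rw [hyq]; rfl
  subst hyt
  refine ⟨(packV_univ hε0 hε1 hK).symm, ?_⟩
  intro z hz
  by_cases hcore : ∀ S : Finset (Player n), packV n K (1 - ε) S ≤ ∑ p ∈ S, z p
  · -- z is in the core
    obtain ⟨htr, htp⟩ := tight hε0 hε1 hK z hz hcore
    by_cases hD : ∀ (l : Fin (n + 2)) (i : Fin 4), z (.p l i) = ytF n ε K (.p l i)
    · -- z = ytF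
      left
      have hzf : z = ytF n ε K := by
        funext x
        cases x with
        | r => rw [htr]; rfl
        | p l i => exact hD l i
        | q l i =>
          have h1 := htp l i
          have h2 := hD l i
          have h3 : ytF n ε K (.p l i) + ytF n ε K (.q l i) = 2 * ((l.1 : ℝ) + 1) * K := by
            simp only [ytF]; ring
          linarith
      rw [hzf]
    · right
      push_neg at hD
      set D : Finset (Fin (n + 2)) :=
        Finset.univ.filter (fun l => ∃ i, z (.p l i) ≠ ytF n ε K (.p l i)) with hDdef
      have hDne : D.Nonempty := by
        obtain ⟨l, i, h⟩ := hD
        exact ⟨l, by simp only [hDdef, Finset.mem_filter, Finset.mem_univ, true_and]; exact ⟨i, h⟩⟩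
      set m := D.min' hDne with hm
      have hmD : m ∈ D := D.min'_mem hDne
      obtain ⟨j0, hj0⟩ : ∃ i, z (.p m i) ≠ ytF n ε K (.p m i) := by
        simpa only [hDdef, Finset.mem_filter, Finset.mem_univ, true_and] using hmD
      have hagree : ∀ l, l < m → ∀ i, z (.p l i) = ytF n ε K (.p l i) := by
        intro l hl i
        by_contra h
        have hlD : l ∈ D := by
          simp only [hDdef, Finset.mem_filter, Finset.mem_univ, true_and]
          exact ⟨i, h⟩
        exact absurd (D.min'_le l hlD) (not_le.mpr hl)
      have hagq : ∀ l, l < m → ∀ i, z (.q l i) = ytF n ε K (.q l i) := by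
        intro l hl i
        have h1 := htp l i
        have h2 := hagree l hl i
        have h3 : ytF n ε K (.p l i) + ytF n ε K (.q l i) = 2 * ((l.1 : ℝ) + 1) * K := by
          simp only [ytF]; ring
        linarith
      have hkey := key_eq hε0 hε1 hK z m htr htp hagree
      -- the witness coalition
      obtain ⟨W, hWz, hWy⟩ : ∃ W : Finset (Player n),
          ((∑ p ∈ W, z p) - packV n K (1 - ε) W < mu ε K m ∧
          ¬ ((∑ p ∈ W, ytF n ε K p) - packV n K (1 - ε) W < mu ε K m)) := by
        have hyqm : ytF n ε K (.q m j0) = mu ε K m := by simp only [ytF, mu]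
        have h3 : ytF n ε K (.p m j0) + ytF n ε K (.q m j0) = 2 * ((m.1 : ℝ) + 1) * K := by
          simp only [ytF]; ring
        rcases lt_or_gt_of_ne hj0 with hlt | hgt
        · rcases Nat.eq_zero_or_pos m.1 with hm0 | hmpos
          · -- m = 0, witness {r, p 0 j0}
            have hm0' : m = 0 := Fin.ext (by simpa using hm0)
            have hmu : mu ε K m = K - 2 ^ (-1 : ℤ) * ε := by
              simp only [mu, hm0']
              norm_num
            have hyp0 : ytF n ε K (.p 0 j0) = K + 2 ^ (-1 : ℤ) * ε := by
              simp only [ytF]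
              norm_num
            have he : (2 : ℝ) ^ (-1 : ℤ) * ε * 2 = ε := by
              rw [show ((2:ℝ))^(-1:ℤ) = 1/2 by norm_num]
              ring
            have hlt0 : z (.p 0 j0) < K + 2 ^ (-1 : ℤ) * ε := by
              rw [hm0', hyp0] at hlt
              exact hlt
            refine ⟨{Player.r, Player.p 0 j0}, ?_, ?_⟩
            · have hge : (1 : ℝ) ≤ packV n K (1 - ε) ({Player.r, Player.p 0 j0} :
                  Finset (Player n)) := by
                have hfs : Feas ({Player.r, Player.p 0 j0} : Finset (Player n)) {Idx.rootP j0} :=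
                  feas_single (by simp [coal])
                simpa [wt] using packV_ge K (1 - ε) hfs
              rw [Finset.sum_pair (by simp), htr, hmu]
              linarith
            · have hle := packV_rootP_le (n := n) (K := K) hε0 hε1 j0
              rw [Finset.sum_pair (by simp)]
              have hyr' : ytF n ε K (.r) = 1 - ε := rfl
              rw [hyr', hyp0, hmu]
              push_neg
              linarith
          · -- m = k.succ, witness the quad coalition
            obtain ⟨k, hks⟩ : ∃ k : Fin (n + 1), k.succ = m := by
              refine ⟨⟨m.1 - 1, by have := m.2; omega⟩, ?_⟩
              apply Fin.ext
              rw [Fin.val_succ]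
              show m.1 - 1 + 1 = m.1
              omega
            have hkc : k.castSucc < m := by
              rw [Fin.lt_def, Fin.coe_castSucc]
              have hv := congrArg Fin.val hks
              rw [Fin.val_succ] at hv
              omega
            refine ⟨coal (Idx.quad k j0), ?_, ?_⟩
            · have hge : wt K (1 - ε) (Idx.quad k j0) ≤ packV n K (1 - ε) (coal (Idx.quad k j0)) := by
                have hfs : Feas (coal (Idx.quad k j0)) {Idx.quad k j0} := feas_single subset_rfl
                simpa using packV_ge K (1 - ε) hfs
              have hmq := mu_quad (n := n) (ε := ε) (K := K) k j0
              have hzy : ∑ p ∈ coal (Idx.quad k j0), z p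
                  = ∑ p ∈ coal (Idx.quad k j0), ytF n ε K p
                    + (z (.p m j0) - ytF n ε K (.p m j0)) := by
                rw [sum_coal_quad, sum_coal_quad, hagq _ hkc 0, hagq _ hkc 1, hagq _ hkc 2,
                  hagq _ hkc 3, hks]
                ring
              rw [hzy]
              rw [hks] at hmq
              linarith [hge, hmq, hlt]
            · have hle := packV_quadset_le hε0 hK k j0
              have hmq := mu_quad (n := n) (ε := ε) (K := K) k j0
              rw [hks] at hmq
              have hwt : wt K (1 - ε) (Idx.quad k j0) = 4 * ((k.1 : ℝ) + 1) * K := by simp [wt]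
              push_neg
              rw [hwt] at hmq
              linarith [hle, hmq]
        · -- z p > yt p, witness {q m j0}
          refine ⟨{Player.q m j0}, ?_, ?_⟩
          · rw [packV_single_q, Finset.sum_singleton]
            have h1 := htp m j0
            linarith [hyqm, h3, hgt]
          · rw [packV_single_q, Finset.sum_singleton, hyqm]
            simp
      -- assemble via the crossing lemma
      unfold excessList
      apply ml_multiset _ _ (by rw [Multiset.card_map, Multiset.card_map]) (mu ε K m)
      · rw [countP_excess, countP_excess]
        apply Finset.card_lt_card
        constructor
        · intro S hS
          rw [Finset.mem_filter] at hS ⊢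
          refine ⟨hS.1, ?_⟩
          rw [hkey S hS.2]
          exact hS.2
        · intro hAB
          have hWA : W ∈ (Finset.univ : Finset (Player n)).powerset.filter
              (fun S => (∑ p ∈ S, z p) - packV n K (1 - ε) S < mu ε K m) := by
            rw [Finset.mem_filter]
            exact ⟨Finset.mem_powerset.mpr (Finset.subset_univ _), hWz⟩
          exact hWy ((Finset.mem_filter.mp (hAB hWA)).2)
      · intro s hs
        rw [countP_excess, countP_excess]
        apply Finset.card_le_card
        intro S hS
        rw [Finset.mem_filter] at hS ⊢
        refine ⟨hS.1, ?_⟩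
        rw [hkey S (lt_of_lt_of_le hS.2 hs)]
        exact hS.2
  · -- z is not in the core
    push_neg at hcore
    obtain ⟨S0, hS0⟩ := hcore
    right
    unfold excessList
    apply ml_multiset _ _ (by rw [Multiset.card_map, Multiset.card_map]) 0
    · rw [countP_excess, countP_excess]
      have hB : ((Finset.univ : Finset (Player n)).powerset.filter
          (fun S => (∑ p ∈ S, ytF n ε K p) - packV n K (1 - ε) S < 0)) = ∅ := by
        rw [Finset.filter_eq_empty_iff]
        intro S _
        have := ytF_core hε0 hε1 hK S
        push_neg
        linarith
      rw [hB]
      rw [Finset.card_empty]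
      apply Finset.card_pos.mpr
      exact ⟨S0, by
        rw [Finset.mem_filter]
        exact ⟨Finset.mem_powerset.mpr (Finset.subset_univ _), by linarith⟩⟩
    · intro s hs
      rw [countP_excess, countP_excess]
      have hB : ((Finset.univ : Finset (Player n)).powerset.filter
          (fun S => (∑ p ∈ S, ytF n ε K p) - packV n K (1 - ε) S < s)) = ∅ := by
        rw [Finset.filter_eq_empty_iff]
        intro S _
        have := ytF_core hε0 hε1 hK S
        push_neg
        linarith
      rw [hB]
      simp
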